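/- Let P be a substochastic n×n real matrix with spectral radius < 1, β ≥ 0 a vector, and Γ ∈ [0,1). If a nonnegative vector λ satisfies λ = β + Pγ for some vector γ with ΓΛλ ≤ γ ≤ λ componentwise (where ΓΛλ denotes Γ·λ), then (I − ΓP)⁻¹β ≤ λ ≤ (I − P)⁻¹β componentwise. -/

import Mathlib

open Matrix

attribute [local instance] Matrix.linftyOpNormedAddCommGroup Matrix.linftyOpNormedRing
  Matrix.linftyOpNormedAlgebra

section aux

variable {n : ℕ}

/-- entries of powers of a nonneg matrix are nonneg -/
lemma pow_entries_nonneg {M : Matrix (Fin n) (Fin n) ℝ} (hM : ∀ i j, 0 ≤ M i j) :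
    ∀ (k : ℕ) (i j : Fin n), 0 ≤ (M ^ k) i j := by
  intro k
  induction k with
  | zero => intro i j; simp [Matrix.one_apply]; positivity
  | succ k ih =>
    intro i j
    rw [pow_succ, Matrix.mul_apply]
    exact Finset.sum_nonneg fun c _ => mul_nonneg (ih i c) (hM c j)

/-- The inverse of `1 - M` has nonneg entries when `‖M‖ < 1` and `M ≥ 0`. -/
lemma ring_inverse_one_sub_nonneg {M : Matrix (Fin n) (Fin n) ℝ}
    (hM : ∀ i j, 0 ≤ M i j) (h : ‖M‖ < 1) (i j : Fin n) :
    0 ≤ Ring.inverse (1 - M) i j := by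
  have hsum : Summable (fun k : ℕ => M ^ k) := summable_geometric_of_norm_lt_one h
  have : Ring.inverse (1 - M) = ∑' k : ℕ, M ^ k := by
    rw [NormedRing.inverse_one_sub M h]; rfl
  rw [this]
  erw [tsum_apply hsum, tsum_apply (Pi.summable.mp hsum i)]
  exact tsum_nonneg fun k => pow_entries_nonneg hM k i j

/-- mulVec monotonicity for nonneg matrices -/
lemma mulVec_mono {Q : Matrix (Fin n) (Fin n) ℝ} (hQ : ∀ i j, 0 ≤ Q i j)
    {x y : Fin n → ℝ} (hxy : x ≤ y) : Q *ᵥ x ≤ Q *ᵥ y := by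
  intro i
  simp only [Matrix.mulVec, dotProduct]
  exact Finset.sum_le_sum fun c _ => mul_le_mul_of_nonneg_left (hxy c) (hQ i c)

end aux

theorem arrival_rate_interval (n : ℕ) (P : Matrix (Fin n) (Fin n) ℝ)
    (hP : ∀ i j, 0 ≤ P i j) (hrow : ∀ i, ∑ j, P i j ≤ 1)
    (hspec : spectralRadius ℝ P < 1)
    (β : Fin n → ℝ) (hβ : 0 ≤ β)
    (Γ : ℝ) (hΓ0 : 0 ≤ Γ) (hΓ1 : Γ < 1)
    (l γ : Fin n → ℝ) (hlpos : 0 ≤ l)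
    (hγl : Γ • l ≤ γ) (hγu : γ ≤ l)
    (htraffic : l = β + P *ᵥ γ) :
    (1 - Γ • P)⁻¹ *ᵥ β ≤ l ∧ l ≤ (1 - P)⁻¹ *ᵥ β := by
  -- norm of P is at most 1
  have hPnorm : ‖P‖ ≤ 1 := by
    rw [Matrix.linfty_opNorm_def]
    rw [show ((1:ℝ)) = ((1 : NNReal) : ℝ) by simp]
    norm_cast
    apply Finset.sup_le
    intro i _
    rw [← NNReal.coe_le_coe]
    push_cast
    calc ∑ j, (‖P i j‖₊ : ℝ) = ∑ j, P i j := by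
          refine Finset.sum_congr rfl fun j _ => ?_
          rw [coe_nnnorm, Real.norm_of_nonneg (hP i j)]
      _ ≤ 1 := hrow i
  -- 1 - P is a unit
  have h1spec : (1 : ℝ) ∉ spectrum ℝ P := by
    intro hmem
    have : (‖(1:ℝ)‖₊ : ENNReal) ≤ spectralRadius ℝ P := le_iSup₂ (f := fun k (_ : k ∈ spectrum ℝ P) => (‖k‖₊ : ENNReal)) 1 hmem
    simp at this
    exact absurd (lt_of_le_of_lt this hspec) (lt_irrefl _)
  have huP : IsUnit (1 - P) := by
    rw [spectrum.notMem_iff] at h1spec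
    simpa using h1spec
  -- norm of Γ • P < 1
  have hΓPnorm : ‖Γ • P‖ < 1 := by
    rw [norm_smul, Real.norm_of_nonneg hΓ0]
    calc Γ * ‖P‖ ≤ Γ * 1 := by nlinarith [norm_nonneg P]
      _ < 1 := by linarith
  have huB : IsUnit (1 - Γ • P) := (Units.oneSub (Γ • P) hΓPnorm).isUnit
  -- entries of Γ • P are nonneg
  have hΓP : ∀ i j, 0 ≤ (Γ • P) i j := fun i j => by
    simpa using mul_nonneg hΓ0 (hP i j)
  -- nonnegativity of (1 - Γ • P)⁻¹
  have hBinv : ∀ i j, 0 ≤ (1 - Γ • P)⁻¹ i j := by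
    intro i j
    rw [Matrix.nonsing_inv_eq_ringInverse]
    exact ring_inverse_one_sub_nonneg hΓP hΓPnorm i j
  -- nonnegativity of (1 - P)⁻¹ via limit s → 1⁻
  have hAinv : ∀ i j, 0 ≤ (1 - P)⁻¹ i j := by
    intro i j
    rw [Matrix.nonsing_inv_eq_ringInverse]
    have hcont : Filter.Tendsto (fun s : ℝ => Ring.inverse (1 - s • P) i j)
        (nhdsWithin 1 (Set.Iio 1)) (nhds (Ring.inverse (1 - P) i j)) := by
      have h1 : ContinuousAt (fun s : ℝ => (1 - s • P : Matrix (Fin n) (Fin n) ℝ)) 1 := by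
        apply ContinuousAt.sub continuousAt_const
        exact (continuousAt_id.smul continuousAt_const)
      have h2 : ContinuousAt (Ring.inverse : Matrix (Fin n) (Fin n) ℝ → _) (1 - P) :=
        NormedRing.inverse_continuousAt huP.unit
      have t1 : Filter.Tendsto (fun s : ℝ => (1 - s • P : Matrix (Fin n) (Fin n) ℝ)) (nhds 1)
          (nhds (1 - P)) := by
        have := h1.tendsto; rwa [one_smul] at this
      have t3 : Filter.Tendsto (fun s : ℝ => Ring.inverse (1 - s • P)) (nhds 1)
          (nhds (Ring.inverse (1 - P))) := h2.tendsto.comp t1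
      have h4 : ContinuousAt (fun A : Matrix (Fin n) (Fin n) ℝ => A i j) (Ring.inverse (1 - P)) :=
        (Continuous.matrix_elem continuous_id i j).continuousAt
      have t4 : Filter.Tendsto (fun s : ℝ => Ring.inverse (1 - s • P) i j) (nhds 1)
          (nhds (Ring.inverse (1 - P) i j)) := h4.tendsto.comp t3
      exact t4.mono_left nhdsWithin_le_nhds
    refine ge_of_tendsto hcont ?_
    filter_upwards [Ioo_mem_nhdsLT_of_mem (by constructor <;> norm_num : (1:ℝ) ∈ Set.Ioc 0 1)] with s hs
    have hsP : ∀ a b, 0 ≤ (s • P) a b := fun a b => by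
      simpa using mul_nonneg (le_of_lt hs.1) (hP a b)
    have hsnorm : ‖s • P‖ < 1 := by
      rw [norm_smul, Real.norm_of_nonneg (le_of_lt hs.1)]
      calc s * ‖P‖ ≤ s * 1 := by nlinarith [norm_nonneg P, hs.1]
        _ < 1 := by simpa using hs.2
    exact ring_inverse_one_sub_nonneg hsP hsnorm i j
  -- key inequalities on (1-P) *ᵥ l and (1-Γ•P) *ᵥ l
  have hPγl : P *ᵥ γ ≤ P *ᵥ l := mulVec_mono hP hγu
  have hPΓ : P *ᵥ (Γ • l) ≤ P *ᵥ γ := mulVec_mono hP hγl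
  have hupper : (1 - P) *ᵥ l ≤ β := by
    intro i
    have hb : β = l - P *ᵥ γ := by rw [htraffic, add_sub_cancel_right]
    rw [Matrix.sub_mulVec, Matrix.one_mulVec]
    have := hPγl i
    simp only [hb, Pi.sub_apply]
    linarith
  have hlower : β ≤ (1 - Γ • P) *ᵥ l := by
    intro i
    have hb : β = l - P *ᵥ γ := by rw [htraffic, add_sub_cancel_right]
    rw [Matrix.sub_mulVec, Matrix.one_mulVec]
    have h5 : (Γ • P) *ᵥ l = P *ᵥ (Γ • l) := by
      rw [Matrix.smul_mulVec, Matrix.mulVec_smul]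
    have := hPΓ i
    rw [← h5] at this
    simp only [hb, Pi.sub_apply]
    linarith
  have hdetA : IsUnit (1 - P).det := (Matrix.isUnit_iff_isUnit_det _).mp huP
  have hdetB : IsUnit (1 - Γ • P).det := (Matrix.isUnit_iff_isUnit_det _).mp huB
  constructor
  · have := mulVec_mono hBinv hlower
    rwa [Matrix.mulVec_mulVec, Matrix.nonsing_inv_mul _ hdetB, Matrix.one_mulVec] at this
  · have := mulVec_mono hAinv hupper
    rwa [Matrix.mulVec_mulVec, Matrix.nonsing_inv_mul _ hdetA, Matrix.one_mulVec] at this
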